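/- Elliptical potential lemma (discounted version): for actions A_1,…,A_T ∈ ℝ^d with ‖A_t‖₂ ≤ L, and W_{t} = Σ_{s=1}^{t} γ^{t-s} A_s A_s^⊤ + (λ/c_μ) I_d with 0 < γ < 1, λ, c_μ > 0, it holds that Σ_{t=1}^T min{1, ‖A_t‖²_{W_{t-1}^{-1}}} ≤ 2d [ T log(1/γ) + log(1 + c_μ L²/(d λ (1-γ))) ]. -/

import Mathlib

open Real Matrix

section AuxEPL
variable {n : ℕ}


lemma psd_smul {M : Matrix (Fin n) (Fin n) ℝ} (hM : M.PosSemidef) {c : ℝ} (hc : 0 ≤ c) :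
    (c • M).PosSemidef := by
  refine Matrix.PosSemidef.of_dotProduct_mulVec_nonneg ?_ ?_
  · unfold Matrix.IsHermitian
    rw [conjTranspose_smul, hM.1]
    simp
  · intro x
    rw [smul_mulVec, dotProduct_smul]
    exact mul_nonneg hc (hM.dotProduct_mulVec_nonneg x)

lemma psd_vecMulVec (a : Fin n → ℝ) : (vecMulVec a a).PosSemidef := by
  refine Matrix.PosSemidef.of_dotProduct_mulVec_nonneg ?_ ?_
  · ext i j
    simp [conjTranspose_apply, vecMulVec_apply, mul_comm]
  · intro x
    have : star x ⬝ᵥ (vecMulVec a a *ᵥ x) = (a ⬝ᵥ x) * (a ⬝ᵥ x) := by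
      simp [dotProduct, vecMulVec_apply, mulVec, Finset.mul_sum, Finset.sum_mul]
      rw [Finset.sum_comm]
      congr 1; ext i; congr 1; ext j; ring
    rw [this]
    exact mul_self_nonneg _

lemma psd_sum {s : Finset ℕ} {f : ℕ → Matrix (Fin n) (Fin n) ℝ}
    (hf : ∀ i ∈ s, (f i).PosSemidef) : (∑ i ∈ s, f i).PosSemidef := by
  classical
  induction s using Finset.induction_on with
  | empty => simpa using Matrix.PosSemidef.zero
  | insert _ _ h ih =>
    rw [Finset.sum_insert h]
    exact Matrix.PosSemidef.add (hf _ (Finset.mem_insert_self _ _))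
      (ih fun i hi => hf i (Finset.mem_insert_of_mem hi))


lemma det_one_add_psd {P : Matrix (Fin n) (Fin n) ℝ} (hP : P.PosSemidef) :
    1 ≤ det (1 + P) := by
  have hH := hP.1
  set U : Matrix (Fin n) (Fin n) ℝ := (hH.eigenvectorUnitary : Matrix (Fin n) (Fin n) ℝ) with hUdef
  have hU : U * star U = 1 := (Matrix.mem_unitaryGroup_iff).mp (hH.eigenvectorUnitary).2
  have key : (1 : Matrix (Fin n) (Fin n) ℝ) + P
      = U * ((1 : Matrix (Fin n) (Fin n) ℝ) + diagonal (RCLike.ofReal ∘ hH.eigenvalues)) * star U := by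
    rw [mul_add, add_mul, mul_one, hU]
    congr 1
    exact hH.spectral_theorem
  rw [key, det_mul, det_mul]
  have : det U * det (star U) = 1 := by
    rw [← det_mul, hU, det_one]
  calc (1:ℝ) = det U * det (star U) * 1 := by rw [this, mul_one]
    _ ≤ det U * det (star U)
        * det ((1 : Matrix (Fin n) (Fin n) ℝ) + diagonal (RCLike.ofReal ∘ hH.eigenvalues)) := by
        rw [this, one_mul, one_mul]
        have : (1 : Matrix (Fin n) (Fin n) ℝ) + diagonal (RCLike.ofReal ∘ hH.eigenvalues)
            = diagonal (fun i => 1 + hH.eigenvalues i) := by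
          rw [← diagonal_one, diagonal_add]
          rfl
        rw [this, det_diagonal]
        calc (1:ℝ) = ∏ _i : Fin n, 1 := by simp
          _ ≤ ∏ i, (1 + hH.eigenvalues i) := by
              refine Finset.prod_le_prod (fun i _ => zero_le_one) (fun i _ => ?_)
              have := hP.eigenvalues_nonneg i
              linarith
    _ = det U * det ((1 : Matrix (Fin n) (Fin n) ℝ) + diagonal (RCLike.ofReal ∘ hH.eigenvalues))
        * det (star U) := by ring

lemma det_le_det_add {B C : Matrix (Fin n) (Fin n) ℝ} (hB : B.PosDef) (hC : C.PosSemidef) :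
    det B ≤ det (B + C) := by
  set S := (open scoped MatrixOrder in CFC.sqrt B) with hSdef
  have hS2 : S * S = B := open scoped MatrixOrder in CFC.sqrt_mul_sqrt_self B hB.posSemidef.nonneg
  have hSps : S.PosSemidef := open scoped MatrixOrder in Matrix.nonneg_iff_posSemidef.mp (CFC.sqrt_nonneg B)
  have hdetS : det S ≠ 0 := by
    intro h
    have : det S * det S = det B := by rw [← det_mul, hS2]
    rw [h, mul_zero] at this
    exact hB.det_pos.ne' this.symm
  have hUnit : IsUnit S.det := isUnit_iff_ne_zero.mpr hdetS
  have hSinv : S * S⁻¹ = 1 := mul_nonsing_inv _ hUnit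
  have hSinv' : S⁻¹ * S = 1 := nonsing_inv_mul _ hUnit
  have hP : (S⁻¹ * C * S⁻¹).PosSemidef := by
    have := hC.conjTranspose_mul_mul_same (S⁻¹)
    rwa [conjTranspose_nonsing_inv, hSps.1] at this
  have key : B + C = S * ((1 : Matrix (Fin n) (Fin n) ℝ) + S⁻¹ * C * S⁻¹) * S := by
    rw [mul_add, add_mul, mul_one, hS2]
    congr 1
    calc C = (S * S⁻¹) * C * (S⁻¹ * S) := by rw [hSinv, hSinv', Matrix.one_mul, Matrix.mul_one]
      _ = S * (S⁻¹ * C * S⁻¹) * S := by simp only [Matrix.mul_assoc]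
  rw [key, det_mul, det_mul]
  have hdetB : det S * det S = det B := by rw [← det_mul, hS2]
  calc det B = det S * det S * 1 := by rw [hdetB, mul_one]
    _ ≤ det S * det S * det ((1 : Matrix (Fin n) (Fin n) ℝ) + S⁻¹ * C * S⁻¹) := by
        have h1 : (0:ℝ) < det S * det S := by
          rw [hdetB]; exact hB.det_pos
        exact mul_le_mul_of_nonneg_left (det_one_add_psd hP) h1.le
    _ = det S * det ((1 : Matrix (Fin n) (Fin n) ℝ) + S⁻¹ * C * S⁻¹) * det S := by ring

lemma trace_eq_sum_eig {M : Matrix (Fin n) (Fin n) ℝ} (hM : M.IsHermitian) :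
    trace M = ∑ i, hM.eigenvalues i := by
  conv_lhs => rw [hM.spectral_theorem]
  rw [Unitary.conjStarAlgAut_apply, trace_mul_cycle]
  have hU : star (hM.eigenvectorUnitary : Matrix (Fin n) (Fin n) ℝ)
      * (hM.eigenvectorUnitary : Matrix (Fin n) (Fin n) ℝ) = 1 :=
    (Matrix.mem_unitaryGroup_iff').mp (hM.eigenvectorUnitary).2
  rw [hU, Matrix.one_mul, trace_diagonal]
  rfl

lemma det_le_trace_pow {M : Matrix (Fin n) (Fin n) ℝ} (hM : M.PosSemidef) (hn : 0 < n) :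
    det M ≤ (trace M / n) ^ n := by
  have hz : ∀ i, 0 ≤ hM.1.eigenvalues i := hM.eigenvalues_nonneg
  have hdet : det M = ∏ i, hM.1.eigenvalues i := by
    have := hM.1.det_eq_prod_eigenvalues
    simpa using this
  have hw : ∑ _i : Fin n, (1 / n : ℝ) = 1 := by
    simp
    field_simp
  have amgm := Real.geom_mean_le_arith_mean_weighted Finset.univ
    (fun _ => (1 / n : ℝ)) (fun i => hM.1.eigenvalues i)
    (fun i _ => by positivity) hw (fun i _ => hz i)
  have hsum : ∑ i : Fin n, (1 / n : ℝ) * hM.1.eigenvalues i = trace M / n := by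
    rw [trace_eq_sum_eig hM.1, Finset.sum_div, eq_comm]
    congr 1; ext i; ring
  have hpow : (∏ i, hM.1.eigenvalues i ^ (1 / n : ℝ)) ^ (n : ℕ) = ∏ i, hM.1.eigenvalues i := by
    rw [← Finset.prod_pow]
    congr 1; ext i
    rw [← Real.rpow_natCast (hM.1.eigenvalues i ^ (1 / n : ℝ)), ← Real.rpow_mul (hz i)]
    rw [one_div, inv_mul_cancel₀ (by exact_mod_cast hn.ne'), Real.rpow_one]
  calc det M = (∏ i, hM.1.eigenvalues i ^ (1 / n : ℝ)) ^ (n : ℕ) := by rw [hpow, hdet]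
    _ ≤ (trace M / n) ^ n := by
        apply pow_le_pow_left₀
        · exact Finset.prod_nonneg fun i _ => Real.rpow_nonneg (hz i) _
        · rw [← hsum]; exact amgm


lemma min_le_two_log {y : ℝ} (hy : 0 ≤ y) : min 1 y ≤ 2 * Real.log (1 + y) := by
  rcases le_or_gt y 1 with h | h
  · rw [min_eq_right (by linarith)]
    have hexp : Real.exp (y / 2) ≤ 1 + y := by
      have h1 : 1 - y / 2 ≤ Real.exp (-(y / 2)) := by
        have := Real.add_one_le_exp (-(y / 2)); linarith
      have h2 : 0 < 1 - y / 2 := by linarith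
      have h3 : Real.exp (y / 2) * Real.exp (-(y / 2)) = 1 := by
        rw [← Real.exp_add]; simp
      nlinarith [Real.exp_pos (y / 2), Real.exp_pos (-(y / 2))]
    have := (Real.le_log_iff_exp_le (by linarith : (0:ℝ) < 1 + y)).mpr hexp
    linarith
  · rw [min_eq_left (by linarith)]
    have hlog2 : (1:ℝ) / 2 ≤ Real.log 2 := by
      rw [Real.le_log_iff_exp_le (by norm_num)]
      have h4 : Real.exp (1/2 : ℝ) * Real.exp (1/2 : ℝ) = Real.exp 1 := by
        rw [← Real.exp_add]; norm_num
      nlinarith [Real.exp_pos (1/2 : ℝ), Real.exp_one_lt_d9]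
    have hmono : Real.log 2 ≤ Real.log (1 + y) :=
      Real.log_le_log (by norm_num) (by linarith)
    linarith

lemma det_add_outer {M : Matrix (Fin n) (Fin n) ℝ} (hM : IsUnit M.det) (a : Fin n → ℝ) :
    det (M + vecMulVec a a) = det M * (1 + a ⬝ᵥ M⁻¹ *ᵥ a) := by
  rw [vecMulVec_eq Unit, Matrix.det_add_replicateCol_mul_replicateRow hM]
  congr 1
  set N : Matrix Unit Unit ℝ := 1 + replicateRow Unit a * M⁻¹ * replicateCol Unit a with hN
  rw [det_unique N, hN]
  simp only [Matrix.add_apply, Matrix.one_apply_eq, Matrix.mul_apply, replicateRow_apply, replicateCol_apply,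
    dotProduct, mulVec, Finset.sum_mul, Finset.mul_sum]
  congr 1
  rw [Finset.sum_comm]
  refine Finset.sum_congr rfl fun i _ => Finset.sum_congr rfl fun j _ => by ring


lemma posdef_smul {M : Matrix (Fin n) (Fin n) ℝ} (hM : M.PosDef) {c : ℝ} (hc : 0 < c) :
    (c • M).PosDef := by
  refine Matrix.PosDef.of_dotProduct_mulVec_pos ?_ ?_
  · unfold Matrix.IsHermitian
    rw [conjTranspose_smul, hM.1]
    simp
  · intro x hx
    rw [smul_mulVec, dotProduct_smul]
    exact mul_pos hc (hM.dotProduct_mulVec_pos hx)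

lemma trace_vecMulVec (a : Fin n → ℝ) : trace (vecMulVec a a) = a ⬝ᵥ a := by
  simp [Matrix.trace, Matrix.diag, vecMulVec_apply, dotProduct]

end AuxEPL

set_option maxHeartbeats 1600000

/-- Elliptical potential lemma, discounted version. -/
theorem elliptical_potential_discounted
    (d T : ℕ) (hd : 0 < d) (A : ℕ → (Fin d → ℝ)) (γ lam cμ L : ℝ)
    (hγ : 0 < γ) (hγ1 : γ < 1) (hlam : 0 < lam) (hcμ : 0 < cμ) (hL : 0 < L)
    (hA : ∀ t, Real.sqrt (A t ⬝ᵥ A t) ≤ L)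
    (W : ℕ → Matrix (Fin d) (Fin d) ℝ)
    (hW : ∀ u, W u = (∑ s ∈ Finset.Icc 1 u, γ ^ (u - s) • vecMulVec (A s) (A s))
      + (lam / cμ) • (1 : Matrix (Fin d) (Fin d) ℝ)) :
    ∑ t ∈ Finset.Icc 1 T, min 1 (A t ⬝ᵥ (W (t - 1))⁻¹.mulVec (A t))
      ≤ 2 * d * ((T : ℝ) * Real.log (1 / γ)
        + Real.log (1 + cμ * L ^ 2 / (d * lam * (1 - γ)))) := by
  set c : ℝ := lam / cμ with hc
  have hcpos : 0 < c := div_pos hlam hcμ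
  have h1γ : 0 < 1 - γ := by linarith
  set K : ℝ := cμ * L ^ 2 / (d * lam * (1 - γ)) with hK
  have hKpos : 0 < K := by
    apply div_pos (by positivity)
    have : (0:ℝ) < d := by exact_mod_cast hd
    positivity
  -- positivity of W
  have hIpos : (c • (1 : Matrix (Fin d) (Fin d) ℝ)).PosDef := posdef_smul Matrix.PosDef.one hcpos
  have hSsum : ∀ u, (∑ s ∈ Finset.Icc 1 u, γ ^ (u - s) • vecMulVec (A s) (A s)).PosSemidef :=
    fun u => psd_sum fun s _ => psd_smul (psd_vecMulVec _) (pow_nonneg hγ.le _)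
  have hWpos : ∀ u, (W u).PosDef := fun u => by
    rw [hW u]; exact Matrix.PosDef.posSemidef_add (hSsum u) hIpos
  have hWdet : ∀ u, 0 < det (W u) := fun u => (hWpos u).det_pos
  -- the recursion
  have hrec : ∀ k : ℕ, W (k + 1)
      = (γ • W k + vecMulVec (A (k+1)) (A (k+1))) + (c * (1 - γ)) • (1 : Matrix (Fin d) (Fin d) ℝ) := by
    intro k
    have hsum : ∑ s ∈ Finset.Icc 1 (k+1), γ ^ (k+1-s) • vecMulVec (A s) (A s)
        = γ • ∑ s ∈ Finset.Icc 1 k, γ ^ (k-s) • vecMulVec (A s) (A s)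
          + vecMulVec (A (k+1)) (A (k+1)) := by
      rw [Finset.sum_Icc_succ_top (Nat.le_add_left 1 k), Finset.smul_sum]
      congr 1
      · refine Finset.sum_congr rfl fun s hs => ?_
        rw [smul_smul, ← pow_succ']
        congr 2
        have hs' : s ≤ k := (Finset.mem_Icc.mp hs).2
        omega
      · simp
    rw [hW (k+1), hW k, hsum]
    module
  -- per-step inequality
  have hstep : ∀ k : ℕ, min 1 (A (k+1) ⬝ᵥ (W k)⁻¹ *ᵥ A (k+1))
      ≤ 2 * (Real.log (det (W (k+1))) - Real.log (det (W k)) + d * Real.log (1/γ)) := by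
    intro k
    set a : Fin d → ℝ := A (k+1) with ha
    set x : ℝ := a ⬝ᵥ (W k)⁻¹ *ᵥ a with hx
    have hx0 : 0 ≤ x := by
      have := ((hWpos k).inv.posSemidef).dotProduct_mulVec_nonneg a
      simpa [hx] using this
    set M : Matrix (Fin d) (Fin d) ℝ := γ • W k with hM
    have hMpos : M.PosDef := posdef_smul (hWpos k) hγ
    have hdetM : det M = γ ^ d * det (W k) := by
      rw [hM, det_smul]; simp
    have hdetMpos : 0 < det M := hMpos.det_pos
    letI : Invertible γ := invertibleOfNonzero hγ.ne'
    have hMinv : M⁻¹ = γ⁻¹ • (W k)⁻¹ := by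
      have hleft : (γ⁻¹ • (W k)⁻¹) * (γ • W k) = 1 := by
        rw [Matrix.smul_mul, Matrix.mul_smul, smul_smul, inv_mul_cancel₀ hγ.ne', one_smul,
          Matrix.nonsing_inv_mul _ ((hWdet k).ne'.isUnit)]
      rw [hM]
      exact Matrix.inv_eq_left_inv hleft
    have hay : a ⬝ᵥ M⁻¹ *ᵥ a = γ⁻¹ * x := by
      rw [hMinv, smul_mulVec, dotProduct_smul]
      rfl
    have hdet1 : det (M + vecMulVec a a) = det M * (1 + γ⁻¹ * x) := by
      rw [det_add_outer hdetMpos.ne'.isUnit a, hay]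
    have hMvvpos : (M + vecMulVec a a).PosDef := hMpos.add_posSemidef (psd_vecMulVec a)
    have hdet2 : det (M + vecMulVec a a) ≤ det (W (k+1)) := by
      rw [hrec k]
      exact det_le_det_add hMvvpos (psd_smul Matrix.PosSemidef.one (by positivity))
    have h5 : det M * (1 + γ⁻¹ * x) ≤ det (W (k+1)) := by rw [← hdet1]; exact hdet2
    have hypos : 0 ≤ γ⁻¹ * x := mul_nonneg (by positivity) hx0
    have h1y : (0:ℝ) < 1 + γ⁻¹ * x := by linarith
    have hlog : Real.log (det M) + Real.log (1 + γ⁻¹ * x) ≤ Real.log (det (W (k+1))) := by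
      rw [← Real.log_mul hdetMpos.ne' h1y.ne']
      exact Real.log_le_log (by positivity) h5
    have hlogM : Real.log (det M) = d * Real.log γ + Real.log (det (W k)) := by
      rw [hdetM, Real.log_mul (by positivity) (hWdet k).ne', Real.log_pow]
    have hmin : min 1 x ≤ 2 * Real.log (1 + γ⁻¹ * x) := by
      have hxy : x ≤ γ⁻¹ * x := by
        nth_rewrite 1 [← one_mul x]
        exact mul_le_mul_of_nonneg_right ((one_le_inv₀ hγ).mpr hγ1.le) hx0
      calc min 1 x ≤ min 1 (γ⁻¹ * x) := min_le_min le_rfl hxy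
        _ ≤ 2 * Real.log (1 + γ⁻¹ * x) := min_le_two_log hypos
    have hloginv : Real.log (1/γ) = - Real.log γ := by
      rw [one_div, Real.log_inv]
    rw [hloginv]
    have : Real.log (1 + γ⁻¹ * x) ≤ Real.log (det (W (k+1))) - Real.log (det (W k)) - d * Real.log γ := by
      rw [hlogM] at hlog; linarith
    linarith [hmin]
  -- reindex and telescope
  set Lg : ℕ → ℝ := fun i => Real.log (det (W i)) with hLg
  have hsum1 : ∑ t ∈ Finset.Icc 1 T, min 1 (A t ⬝ᵥ (W (t - 1))⁻¹ *ᵥ A t)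
      = ∑ i ∈ Finset.range T, min 1 (A (i+1) ⬝ᵥ (W i)⁻¹ *ᵥ A (i+1)) := by
    rw [← Finset.Ico_add_one_right_eq_Icc, Finset.sum_Ico_eq_sum_range]
    simp only [Nat.succ_sub_one, Nat.add_sub_cancel]
    refine Finset.sum_congr rfl fun i _ => ?_
    rw [Nat.add_comm 1 i]
    simp only [Nat.add_sub_cancel]
  have hsum2 : ∑ i ∈ Finset.range T, min 1 (A (i+1) ⬝ᵥ (W i)⁻¹ *ᵥ A (i+1))
      ≤ ∑ i ∈ Finset.range T, 2 * (Lg (i+1) - Lg i + d * Real.log (1/γ)) :=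
    Finset.sum_le_sum fun i _ => hstep i
  have hsum3 : ∑ i ∈ Finset.range T, 2 * (Lg (i+1) - Lg i + d * Real.log (1/γ))
      = 2 * ((Lg T - Lg 0) + T * (d * Real.log (1/γ))) := by
    rw [← Finset.mul_sum, Finset.sum_add_distrib, Finset.sum_range_sub, Finset.sum_const,
      Finset.card_range, nsmul_eq_mul]
  -- bound the telescoped term
  have hW0 : det (W 0) = c ^ d := by
    rw [hW 0]
    simp [det_smul]
  have hAsq : ∀ s, A s ⬝ᵥ A s ≤ L ^ 2 := by
    intro s
    have hnn : 0 ≤ A s ⬝ᵥ A s := Finset.sum_nonneg fun i _ => mul_self_nonneg _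
    have := hA s
    nlinarith [Real.sq_sqrt hnn, Real.sqrt_nonneg (A s ⬝ᵥ A s)]
  have htr : trace (W T) ≤ L ^ 2 / (1 - γ) + c * d := by
    rw [hW T, trace_add, trace_smul, trace_one, Matrix.trace_sum]
    have hterm : ∀ s ∈ Finset.Icc 1 T, trace (γ ^ (T - s) • vecMulVec (A s) (A s))
        ≤ γ ^ (T - s) * L ^ 2 := by
      intro s _
      rw [trace_smul, _root_.trace_vecMulVec, smul_eq_mul]
      exact mul_le_mul_of_nonneg_left (hAsq s) (pow_nonneg hγ.le _)
    have hgeom : ∑ s ∈ Finset.Icc 1 T, γ ^ (T - s) ≤ 1 / (1 - γ) := by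
      have hre : ∑ s ∈ Finset.Icc 1 T, γ ^ (T - s) = ∑ i ∈ Finset.range T, γ ^ i := by
        rw [← Finset.Ico_add_one_right_eq_Icc, Finset.sum_Ico_eq_sum_range]
        simp only [Nat.succ_sub_one, Nat.add_sub_cancel]
        rw [← Finset.sum_range_reflect]
        refine Finset.sum_congr rfl fun i hi => ?_
        have := Finset.mem_range.mp hi
        congr 1
        omega
      rw [hre, geom_sum_eq hγ1.ne]
      have h1 : (γ ^ T - 1) / (γ - 1) = (1 - γ ^ T) / (1 - γ) := by
        rw [div_eq_div_iff (by linarith) (by linarith)]; ring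
      rw [h1]
      gcongr
      linarith [pow_nonneg hγ.le T]
    rw [Fintype.card_fin]
    calc (∑ s ∈ Finset.Icc 1 T, trace (γ ^ (T - s) • vecMulVec (A s) (A s))) + c • (d:ℝ)
        ≤ (∑ s ∈ Finset.Icc 1 T, γ ^ (T - s) * L ^ 2) + c * d := by
          rw [smul_eq_mul]
          exact add_le_add_left (Finset.sum_le_sum hterm) _
      _ = (∑ s ∈ Finset.Icc 1 T, γ ^ (T - s)) * L ^ 2 + c * d := by rw [Finset.sum_mul]
      _ ≤ (1 / (1 - γ)) * L ^ 2 + c * d := by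
          have := mul_le_mul_of_nonneg_right hgeom (by positivity : (0:ℝ) ≤ L ^ 2)
          linarith
      _ = L ^ 2 / (1 - γ) + c * d := by ring
  have hdT : (0:ℝ) < d := by exact_mod_cast hd
  have htrK : trace (W T) / d ≤ c * (1 + K) := by
    have hcK : c * (1 + K) = c + L ^ 2 / (d * (1 - γ)) := by
      rw [hK, hc]
      field_simp
      try ring
    rw [hcK, div_le_iff₀ hdT]
    calc trace (W T) ≤ L ^ 2 / (1 - γ) + c * d := htr
      _ = (c + L ^ 2 / (d * (1 - γ))) * d := by field_simp; try ring
  have htrnn : 0 ≤ trace (W T) := by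
    rw [trace_eq_sum_eig (hWpos T).posSemidef.1]
    exact Finset.sum_nonneg fun i _ => (hWpos T).posSemidef.eigenvalues_nonneg i
  have hdetT : det (W T) ≤ (c * (1 + K)) ^ d := by
    calc det (W T) ≤ (trace (W T) / d) ^ d := det_le_trace_pow (hWpos T).posSemidef hd
      _ ≤ (c * (1 + K)) ^ d := pow_le_pow_left₀ (by positivity) htrK d
  have htele : Lg T - Lg 0 ≤ d * Real.log (1 + K) := by
    have hL0 : Lg 0 = d * Real.log c := by
      rw [hLg]; simp only []
      rw [hW0, Real.log_pow]
    have hLT : Lg T ≤ d * (Real.log c + Real.log (1 + K)) := by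
      have h1 : Lg T ≤ Real.log ((c * (1 + K)) ^ d) :=
        Real.log_le_log (hWdet T) hdetT
      rwa [Real.log_pow, Real.log_mul hcpos.ne' (by linarith : (1:ℝ) + K ≠ 0)] at h1
    rw [hL0]
    nlinarith [hLT]
  -- assemble
  rw [hsum1]
  calc ∑ i ∈ Finset.range T, min 1 (A (i+1) ⬝ᵥ (W i)⁻¹ *ᵥ A (i+1))
      ≤ 2 * ((Lg T - Lg 0) + T * (d * Real.log (1/γ))) := by rw [← hsum3]; exact hsum2
    _ ≤ 2 * (d * Real.log (1 + K) + T * (d * Real.log (1/γ))) := by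
        have := htele; nlinarith []
    _ = 2 * d * ((T : ℝ) * Real.log (1/γ) + Real.log (1 + K)) := by ring
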